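/- Let $\mu$ be a locally finite nonnegative Borel measure on $\mathbb{R}^d$, and let $\rho > 0$, $b > 0$ be such that for every nonnegative Schwartz function $\varphi : \mathbb{R}^d \to \mathbb{R}$ whose Fourier transform $\mathcal{F}\varphi$ is supported in the open ball $B(0;b)$, one has $\int_{\mathbb{R}^d} \varphi \, \mathrm{d}\mu = \rho \int_{\mathbb{R}^d} \varphi(x)\,\mathrm{d}x$. Then there exist constants $C, c > 0$ depending only on the dimension $d$ such that $\mu(Q) \le c\,\rho\, b^{-d}$ for every axis-parallel cube $Q \subset \mathbb{R}^d$ of side length $C b^{-1}$. -/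

import Mathlib

open MeasureTheory Metric
open scoped FourierTransform RealInnerProductSpace BigOperators

noncomputable section

/-- Euclidean space `ℝ^d`. -/
abbrev Ed (d : ℕ) := EuclideanSpace ℝ (Fin d)

/-- The axis-parallel cube in `ℝ^d` with center `x` and side length `s`. -/
def cube {d : ℕ} (x : Ed d) (s : ℝ) : Set (Ed d) :=
  {y | ∀ i, |y i - x i| ≤ s / 2}

-- bump
def gb (d : ℕ) : ContDiffBump (0 : Ed d) := ⟨1/4, 1/2, by norm_num, by norm_num⟩

def gC (d : ℕ) : Ed d → ℂ := fun x => ((gb d) x : ℂ)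

lemma gC_contDiff (d : ℕ) : ContDiff ℝ ((⊤ : ℕ∞) : WithTop ℕ∞) (gC d) :=
  Complex.ofRealCLM.contDiff.comp (gb d).contDiff

lemma gC_compactSupport (d : ℕ) : HasCompactSupport (gC d) :=
  ((gb d).hasCompactSupport).comp_left (g := fun r : ℝ => (r : ℂ)) (by simp)

lemma gC_supp (d : ℕ) {x : Ed d} (hx : (1:ℝ)/2 ≤ ‖x‖) : gC d x = 0 := by
  have : (gb d) x = 0 := (gb d).zero_of_le_dist (by simpa [gb, dist_zero_right] using hx)
  simp [gC, this]

lemma gC_nonneg (d : ℕ) (x : Ed d) : 0 ≤ ((gb d) x) := (gb d).nonneg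

/-- smooth compactly supported → Schwartz -/
def toSchwartz {E F : Type*} [NormedAddCommGroup E] [NormedSpace ℝ E]
    [NormedAddCommGroup F] [NormedSpace ℝ F]
    (f : E → F) (hf : ContDiff ℝ ((⊤ : ℕ∞) : WithTop ℕ∞) f) (hsupp : HasCompactSupport f) :
    SchwartzMap E F where
  toFun := f
  smooth' := hf
  decay' := by
    intro k n
    have h1 : Continuous fun x => ‖x‖ ^ k * ‖iteratedFDeriv ℝ n f x‖ :=
      (continuous_norm.pow k).mul (hf.continuous_iteratedFDeriv (by exact_mod_cast le_top)).norm
    have h2 : HasCompactSupport fun x => ‖x‖ ^ k * ‖iteratedFDeriv ℝ n f x‖ :=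
      ((hsupp.iteratedFDeriv n).norm).mul_left
    obtain ⟨C, hC⟩ := h1.bounded_above_of_compact_support h2
    exact ⟨C, fun x => by simpa using hC x⟩

def gS (d : ℕ) : SchwartzMap (Ed d) ℂ := toSchwartz (gC d) (gC_contDiff d) (gC_compactSupport d)

lemma gS_apply (d : ℕ) (x : Ed d) : gS d x = gC d x := rfl

-- inverse Fourier transform of the bump
def hS (d : ℕ) : SchwartzMap (Ed d) ℂ := (SchwartzMap.fourierTransformCLE ℂ (SchwartzMap (Ed d) ℂ)).symm (gS d)

lemma hS_eq (d : ℕ) : ⇑(hS d) = 𝓕⁻ ⇑(gS d) := by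
  show ⇑(𝓕⁻ (gS d) : SchwartzMap (Ed d) ℂ) = _
  exact SchwartzMap.fourierInv_coe _

lemma fourier_gS_integrable (d : ℕ) : Integrable (𝓕 ⇑(gS d)) := by
  rw [← SchwartzMap.fourier_coe]
  exact SchwartzMap.integrable _

lemma fourier_hS (d : ℕ) : 𝓕 ⇑(hS d) = ⇑(gS d) := by
  rw [hS_eq]
  exact ((gS d).continuous).fourier_fourierInv_eq (gS d).integrable (fourier_gS_integrable d)
/-- the real-bilinear map `(z,w) ↦ (z * conj w).re` -/
def Bre : ℂ →L[ℝ] ℂ →L[ℝ] ℝ :=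
  ((ContinuousLinearMap.compL ℝ ℂ ℂ ℝ).flip Complex.conjCLE.toContinuousLinearMap).comp
    (((ContinuousLinearMap.compL ℝ ℂ ℂ ℝ) Complex.reCLM).comp (ContinuousLinearMap.mul ℝ ℂ))

lemma Bre_apply (z w : ℂ) : Bre z w = (z * (starRingEnd ℂ) w).re := rfl

lemma schwartz_temperate {E F : Type*} [NormedAddCommGroup E] [NormedSpace ℝ E]
    [NormedAddCommGroup F] [NormedSpace ℝ F] (f : SchwartzMap E F) :
    Function.HasTemperateGrowth ⇑f := by
  refine ⟨f.smooth ⊤, fun n => ⟨0, SchwartzMap.seminorm ℝ 0 n f, fun x => ?_⟩⟩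
  simpa using f.le_seminorm ℝ 0 n x


def ΦS (d : ℕ) : SchwartzMap (Ed d) ℝ :=
  SchwartzMap.bilinLeftCLM Bre (schwartz_temperate (hS d)) (hS d)

lemma ΦS_apply (d : ℕ) (x : Ed d) : ΦS d x = (hS d x * (starRingEnd ℂ) (hS d x)).re := rfl

lemma ΦS_nonneg (d : ℕ) (x : Ed d) : 0 ≤ ΦS d x := by
  rw [ΦS_apply, Complex.mul_conj]
  simpa using Complex.normSq_nonneg (hS d x)

lemma ΦS_coe (d : ℕ) (x : Ed d) : ((ΦS d x : ℝ) : ℂ) = hS d x * (starRingEnd ℂ) (hS d x) := by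
  rw [ΦS_apply, Complex.mul_conj]; simp

lemma conj_hS (d : ℕ) (x : Ed d) : (starRingEnd ℂ) (hS d x) = 𝓕 ⇑(gS d) x := by
  rw [hS_eq, Real.fourierInv_eq', Real.fourier_eq', ← integral_conj]
  congr 1; ext v
  rw [smul_eq_mul, smul_eq_mul, map_mul]
  congr 1
  · rw [← Complex.exp_conj]
    congr 1
    rw [map_mul, Complex.conj_ofReal, Complex.conj_I]
    push_cast; ring
  · show (starRingEnd ℂ) (((gb d) v : ℝ) : ℂ) = _
    rw [Complex.conj_ofReal]; rfl

lemma F_integrable (d : ℕ) (ξ : Ed d) : Integrable (Function.uncurry fun x v =>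
    (𝐞 (-(⟪x, ξ⟫)) • hS d x) * (𝐞 (-(⟪v, x⟫)) • gC d v)) (volume.prod volume) := by
  have c1 : Continuous fun p : Ed d × Ed d => 𝐞 (-(⟪p.1, ξ⟫)) :=
    Real.continuous_fourierChar.comp (continuous_fst.inner continuous_const).neg
  have c2 : Continuous fun p : Ed d × Ed d => 𝐞 (-(⟪p.2, p.1⟫)) :=
    Real.continuous_fourierChar.comp (continuous_snd.inner continuous_fst).neg
  apply Integrable.mono' (((hS d).integrable.norm).mul_prod ((gS d).integrable.norm))
  · exact (Continuous.mul (c1.smul ((hS d).continuous.comp continuous_fst))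
      (c2.smul ((gS d).continuous.comp continuous_snd))).aestronglyMeasurable
  · refine Filter.Eventually.of_forall ?_
    rintro ⟨x, v⟩
    simp only [Function.uncurry, norm_mul, Circle.norm_smul]
    exact le_of_eq rfl

lemma fourier_Phi (d : ℕ) (ξ : Ed d) :
    𝓕 (fun x => ((ΦS d x : ℝ) : ℂ)) ξ = ∫ v, gC d v * gC d (ξ + v) := by
  have hΦ : (fun x : Ed d => ((ΦS d x : ℝ) : ℂ)) = fun x => hS d x * 𝓕 ⇑(gS d) x := by
    ext x; rw [ΦS_coe, conj_hS]
  rw [hΦ, Real.fourier_eq]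
  have step1 : ∀ x : Ed d, 𝐞 (-(⟪x, ξ⟫)) • (hS d x * 𝓕 ⇑(gS d) x)
      = ∫ v, (𝐞 (-(⟪x, ξ⟫)) • hS d x) * (𝐞 (-(⟪v, x⟫)) • gC d v) := by
    intro x
    rw [Real.fourier_eq (f := ⇑(gS d))]
    simp_rw [Circle.smul_def, smul_eq_mul, mul_assoc]
    rw [integral_const_mul, integral_const_mul]
    rfl
  simp_rw [step1]
  rw [integral_integral_swap (F_integrable d ξ)]
  congr 1; ext v
  have step2 : ∀ x : Ed d, (𝐞 (-(⟪x, ξ⟫)) • hS d x) * (𝐞 (-(⟪v, x⟫)) • gC d v)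
      = gC d v * (𝐞 (-(⟪x, ξ + v⟫)) • hS d x) := by
    intro x
    have hchar : ((𝐞 (-(⟪x, ξ⟫)) : Circle) : ℂ) * ((𝐞 (-(⟪v, x⟫)) : Circle) : ℂ)
        = ((𝐞 (-(⟪x, ξ + v⟫)) : Circle) : ℂ) := by
      rw [← Circle.coe_mul, ← AddChar.map_add_eq_mul]
      have : -(⟪x, ξ⟫) + -(⟪v, x⟫) = -(⟪x, ξ + v⟫) := by
        rw [inner_add_right, real_inner_comm v x]; ring
      rw [this]
    simp only [Circle.smul_def, smul_eq_mul]
    rw [← hchar]; ring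
  simp_rw [step2]
  rw [integral_const_mul]
  congr 1
  have : (fun x : Ed d => 𝐞 (-(⟪x, ξ + v⟫)) • hS d x) = fun x => 𝐞 (-(⟪x, ξ + v⟫)) • hS d x := rfl
  calc (∫ x : Ed d, 𝐞 (-(⟪x, ξ + v⟫)) • hS d x) = 𝓕 ⇑(hS d) (ξ + v) := by
        rw [Real.fourier_eq]
      _ = gC d (ξ + v) := by rw [fourier_hS]; rfl

lemma fourier_Phi_vanish (d : ℕ) {ξ : Ed d} (hξ : 1 ≤ ‖ξ‖) :
    𝓕 (fun x => ((ΦS d x : ℝ) : ℂ)) ξ = 0 := by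
  rw [fourier_Phi]
  have : ∀ v : Ed d, gC d v * gC d (ξ + v) = 0 := by
    intro v
    rcases le_or_gt (1/2 : ℝ) ‖v‖ with h | h
    · rw [gC_supp d h, zero_mul]
    · have : (1/2 : ℝ) ≤ ‖ξ + v‖ := by
        have := norm_add_le (ξ + v) (-v)
        simp only [add_neg_cancel_right, norm_neg] at this
        linarith
      rw [gC_supp d this, mul_zero]
  simp [this]

lemma hS_zero (d : ℕ) : hS d 0 = ((∫ x, (gb d) x : ℝ) : ℂ) := by
  have : hS d 0 = ∫ v, gC d v := by
    rw [hS_eq, Real.fourierInv_eq]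
    simp only [inner_zero_right, neg_zero, AddChar.map_zero_eq_one, one_smul]
    rfl
  rw [this]
  unfold gC
  exact integral_ofReal

lemma Phi_zero_pos (d : ℕ) : 0 < ΦS d 0 := by
  rw [ΦS_apply, Complex.mul_conj, hS_zero, Complex.normSq_ofReal]
  have h : (0:ℝ) < ∫ x, (gb d) x := (gb d).integral_pos
  rw [Complex.ofReal_re]
  exact mul_pos h h

section Scaling
variable {d : ℕ}

lemma T_temperate (b : ℝ) (x₀ : Ed d) :
    Function.HasTemperateGrowth (fun y : Ed d => b • (y - x₀)) := by
  have hderiv : ∀ y : Ed d, HasFDerivAt (fun y : Ed d => b • (y - x₀))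
      (b • ContinuousLinearMap.id ℝ (Ed d)) y := by
    intro y
    exact ((hasFDerivAt_id y).sub_const x₀).const_smul b
  apply Function.HasTemperateGrowth.of_fderiv (k := 1) (C := |b| * (1 + ‖x₀‖))
  · have : (fderiv ℝ fun y : Ed d => b • (y - x₀)) = fun _ => b • ContinuousLinearMap.id ℝ (Ed d) :=
      funext fun y => (hderiv y).fderiv
    rw [this]
    exact Function.HasTemperateGrowth.const _
  · exact fun y => (hderiv y).differentiableAt
  · intro y
    rw [norm_smul]
    calc |b| * ‖y - x₀‖ ≤ |b| * (‖y‖ + ‖x₀‖) := by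
          gcongr; exact norm_sub_le y x₀
      _ ≤ |b| * (1 + ‖x₀‖) * (1 + ‖y‖) ^ 1 := by
          rw [pow_one]
          nlinarith [abs_nonneg b, norm_nonneg y, norm_nonneg x₀,
            mul_nonneg (norm_nonneg x₀) (norm_nonneg y),
            mul_nonneg (abs_nonneg b) (mul_nonneg (norm_nonneg x₀) (norm_nonneg y))]

/-- the scaled-translated Schwartz function -/
def phiS (d : ℕ) {b : ℝ} (hb : 0 < b) (x₀ : Ed d) : SchwartzMap (Ed d) ℝ :=
  SchwartzMap.compCLM (𝕜 := ℝ) (T_temperate b x₀)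
    ⟨1, b⁻¹ + ‖x₀‖, by
      intro y
      have h1 : ‖y‖ ≤ b⁻¹ * ‖b • (y - x₀)‖ + ‖x₀‖ := by
        rw [norm_smul, Real.norm_eq_abs, abs_of_pos hb, ← mul_assoc, inv_mul_cancel₀ hb.ne',
          one_mul]
        calc ‖y‖ ≤ ‖y - x₀‖ + ‖x₀‖ := by
              simpa using norm_add_le (y - x₀) x₀
          _ = _ := rfl
      calc ‖y‖ ≤ b⁻¹ * ‖b • (y - x₀)‖ + ‖x₀‖ := h1
        _ ≤ (b⁻¹ + ‖x₀‖) * (1 + ‖b • (y - x₀)‖) ^ 1 := by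
            rw [pow_one]
            have hb' : 0 ≤ b⁻¹ := by positivity
            nlinarith [norm_nonneg (b • (y - x₀)), norm_nonneg x₀]⟩
    (ΦS d)

lemma phiS_apply (d : ℕ) {b : ℝ} (hb : 0 < b) (x₀ : Ed d) (x : Ed d) :
    phiS d hb x₀ x = ΦS d (b • (x - x₀)) := rfl

lemma fourier_comp_smul {b : ℝ} (hb : 0 < b) (f : Ed d → ℂ) (w : Ed d) :
    𝓕 (fun x : Ed d => f (b • x)) w = ((b ^ d : ℝ))⁻¹ • 𝓕 f (b⁻¹ • w) := by
  have key := MeasureTheory.Measure.integral_comp_smul (volume : Measure (Ed d))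
    (fun y : Ed d => 𝐞 (-(⟪b⁻¹ • y, w⟫)) • f y) b
  rw [Real.fourier_eq, Real.fourier_eq]
  have h1 : ∀ x : Ed d, 𝐞 (-(⟪x, w⟫)) • f (b • x)
      = 𝐞 (-(⟪b⁻¹ • (b • x), w⟫)) • f (b • x) := by
    intro x
    rw [smul_smul, inv_mul_cancel₀ hb.ne', one_smul]
  simp_rw [h1]
  rw [key]
  have h2 : ∀ y : Ed d, (⟪b⁻¹ • y, w⟫ : ℝ) = ⟪y, b⁻¹ • w⟫ := by
    intro y
    rw [real_inner_smul_left, real_inner_smul_right]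
  simp_rw [h2]
  rw [finrank_euclideanSpace_fin]
  congr 1
  exact abs_of_nonneg (by positivity)

lemma fourier_translate (ψ : Ed d → ℂ) (v₀ w : Ed d) :
    𝓕 (fun x : Ed d => ψ (x + v₀)) w = 𝐞 (⟪v₀, w⟫) • 𝓕 ψ w := by
  have := VectorFourier.fourierIntegral_comp_add_right 𝐞 (volume : Measure (Ed d))
    (innerₗ (Ed d)) ψ v₀
  exact congrFun this w

end Scaling

section Main
variable {d : ℕ}

lemma phiS_fourier_support {b : ℝ} (hb : 0 < b) (x₀ : Ed d) {w : Ed d} (hw : b ≤ ‖w‖) :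
    𝓕 (fun x => ((phiS d hb x₀ x : ℝ) : ℂ)) w = 0 := by
  have heq : (fun x : Ed d => ((phiS d hb x₀ x : ℝ) : ℂ))
      = fun x => (fun y : Ed d => ((ΦS d (b • y) : ℝ) : ℂ)) (x + (-x₀)) := by
    funext x
    rw [phiS_apply, sub_eq_add_neg]
  rw [heq, fourier_translate (fun y : Ed d => ((ΦS d (b • y) : ℝ) : ℂ)) (-x₀) w]
  have h2 : (fun y : Ed d => ((ΦS d (b • y) : ℝ) : ℂ))
      = fun y : Ed d => (fun z => ((ΦS d z : ℝ) : ℂ)) (b • y) := rfl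
  rw [h2, fourier_comp_smul hb (fun z : Ed d => ((ΦS d z : ℝ) : ℂ)) w,
    fourier_Phi_vanish d ?_, smul_zero, smul_zero]
  rw [norm_smul, Real.norm_eq_abs, abs_of_pos (by positivity : (0:ℝ) < b⁻¹)]
  rw [← inv_mul_cancel₀ hb.ne']
  gcongr

lemma phiS_integral {b : ℝ} (hb : 0 < b) (x₀ : Ed d) :
    ∫ x, phiS d hb x₀ x = (b ^ d)⁻¹ * ∫ x, ΦS d x := by
  have heq : (fun x : Ed d => phiS d hb x₀ x)
      = fun x => (fun y : Ed d => ΦS d (b • y)) (x + (-x₀)) := by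
    funext x; rw [phiS_apply, sub_eq_add_neg]
  rw [heq, integral_add_right_eq_self (fun y : Ed d => ΦS d (b • y)) (-x₀)]
  have := MeasureTheory.Measure.integral_comp_smul (volume : Measure (Ed d)) (⇑(ΦS d)) b
  rw [this, finrank_euclideanSpace_fin, smul_eq_mul]
  congr 1
  exact abs_of_nonneg (by positivity)

lemma norm_le_of_coord {z : Ed d} {a : ℝ} (ha : 0 ≤ a) (h : ∀ i, |z i| ≤ a) :
    ‖z‖ ≤ (d + 1) * a := by
  rw [EuclideanSpace.norm_eq]
  have hsum : ∑ i, ‖z i‖ ^ 2 ≤ ((d + 1) * a) ^ 2 := by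
    calc ∑ i, ‖z i‖ ^ 2 ≤ ∑ _i : Fin d, a ^ 2 := by
          apply Finset.sum_le_sum
          intro i _
          rw [Real.norm_eq_abs]
          exact pow_le_pow_left₀ (abs_nonneg _) (h i) 2
      _ = d * a ^ 2 := by simp [Finset.sum_const, nsmul_eq_mul]
      _ ≤ ((d + 1) * a) ^ 2 := by
          have : ((d:ℝ)) ≤ ((d:ℝ) + 1) ^ 2 := by nlinarith [Nat.cast_nonneg (α := ℝ) d]
          calc (d:ℝ) * a ^ 2 ≤ ((d:ℝ)+1)^2 * a ^ 2 := by nlinarith [sq_nonneg a]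
            _ = (((d:ℝ)+1) * a) ^ 2 := by ring
  calc Real.sqrt (∑ i, ‖z i‖ ^ 2) ≤ Real.sqrt (((d + 1) * a) ^ 2) := Real.sqrt_le_sqrt hsum
    _ = (d + 1) * a := Real.sqrt_sq (by positivity)

lemma cube_measurable (x : Ed d) (s : ℝ) : MeasurableSet (cube x s) := by
  have : cube x s = ⋂ i, {y : Ed d | |y i - x i| ≤ s / 2} := by
    ext y; simp [cube, Set.mem_iInter]
  rw [this]
  refine MeasurableSet.iInter fun i => ?_
  have hc : Continuous fun y : Ed d => |y i - x i| :=
    (((EuclideanSpace.proj i).continuous).sub continuous_const).abs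
  exact (isClosed_le hc continuous_const).measurableSet

lemma exists_r (d : ℕ) : ∃ r > (0:ℝ), ∀ y : Ed d, ‖y‖ ≤ r → ΦS d 0 / 2 ≤ ΦS d y := by
  have hc : ContinuousAt (ΦS d) 0 := (ΦS d).continuous.continuousAt
  rw [Metric.continuousAt_iff] at hc
  obtain ⟨ε, hε, H⟩ := hc (ΦS d 0 / 2) (half_pos (Phi_zero_pos d))
  refine ⟨ε / 2, half_pos hε, fun y hy => ?_⟩
  have h1 : dist y 0 < ε := by rw [dist_zero_right]; linarith
  have h2 := H h1
  rw [Real.dist_eq] at h2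
  have := abs_lt.mp h2
  linarith [this.1]

end Main
/-- **Deterministic anti-concentration.**
For every dimension `d` there are constants `C, c > 0` depending only on `d` with the
following property. Let `μ` be a locally finite nonnegative Borel measure on `ℝ^d` and
`ρ, b > 0` be such that `∫ φ dμ = ρ ∫ φ dx` for every nonnegative Schwartz function `φ`
whose Fourier transform is supported in the open ball `B(0; b)`. Then
`μ(Q) ≤ c ρ b^{-d}` for every axis-parallel cube `Q` of side length `C b⁻¹`. -/
theorem deterministic_anti_concentration (d : ℕ) :
    ∃ C c : ℝ, 0 < C ∧ 0 < c ∧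
      ∀ (μ : Measure (Ed d)), IsLocallyFiniteMeasure μ →
        ∀ (ρ b : ℝ), 0 < ρ → 0 < b →
          (∀ φ : SchwartzMap (Ed d) ℝ, (∀ x, 0 ≤ φ x) →
            Function.support (𝓕 (fun x => (φ x : ℂ))) ⊆ ball (0 : Ed d) b →
            (∫⁻ x, ENNReal.ofReal (φ x) ∂μ) = ENNReal.ofReal (ρ * ∫ x, φ x)) →
          ∀ x : Ed d, μ (cube x (C * b⁻¹)) ≤ ENNReal.ofReal (c * ρ * b ^ (-(d : ℤ))) := by
  obtain ⟨r, hr, hΦr⟩ := exists_r d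
  set δ : ℝ := ΦS d 0 / 2 with hδdef
  have hδ : 0 < δ := half_pos (Phi_zero_pos d)
  set IΦ : ℝ := ∫ x, ΦS d x with hIΦdef
  have hIΦ : 0 ≤ IΦ := integral_nonneg fun x => ΦS_nonneg d x
  refine ⟨r / (d + 1), δ⁻¹ * IΦ + 1, by positivity, by positivity, ?_⟩
  intro μ _ ρ b hρ hb hyp x₀
  set C : ℝ := r / (d + 1) with hCdef
  have hC : 0 < C := by positivity
  set Q : Set (Ed d) := cube x₀ (C * b⁻¹) with hQdef
  set φ : SchwartzMap (Ed d) ℝ := phiS d hb x₀ with hφdef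
  -- the hypothesis applied to φ
  have hnonneg : ∀ x, 0 ≤ φ x := fun x => ΦS_nonneg d _
  have hsupport : Function.support (𝓕 (fun x => (φ x : ℂ))) ⊆ ball (0 : Ed d) b := by
    intro w hw
    rw [mem_ball_zero_iff]
    by_contra hcon
    exact hw (phiS_fourier_support hb x₀ (not_lt.mp hcon))
  have key := hyp φ hnonneg hsupport
  -- lower bound of φ on the cube
  have hcube : ∀ y ∈ Q, δ ≤ φ y := by
    intro y hy
    have hz : ∀ i, |(b • (y - x₀)) i| ≤ C / 2 := by
      intro i
      have h1 : |y i - x₀ i| ≤ C * b⁻¹ / 2 := hy i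
      have h2 : (b • (y - x₀)) i = b * (y i - x₀ i) := by
        simp [PiLp.smul_apply, PiLp.sub_apply, smul_eq_mul]
      rw [h2, abs_mul, abs_of_pos hb]
      calc b * |y i - x₀ i| ≤ b * (C * b⁻¹ / 2) := by gcongr
        _ = C / 2 * (b * b⁻¹) := by ring
        _ = C / 2 := by rw [mul_inv_cancel₀ hb.ne', mul_one]
    have hnorm : ‖b • (y - x₀)‖ ≤ r := by
      calc ‖b • (y - x₀)‖ ≤ (d + 1) * (C / 2) := norm_le_of_coord (by positivity) hz
        _ = r / 2 := by rw [hCdef]; field_simp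
        _ ≤ r := by linarith
    exact hΦr _ hnorm
  -- Markov-type bound
  have hQm : MeasurableSet Q := cube_measurable x₀ (C * b⁻¹)
  have stepA : ENNReal.ofReal δ * μ Q ≤ ENNReal.ofReal (ρ * ∫ x, φ x) := by
    calc ENNReal.ofReal δ * μ Q = ∫⁻ _ in Q, ENNReal.ofReal δ ∂μ :=
          (setLIntegral_const Q _).symm
      _ ≤ ∫⁻ y in Q, ENNReal.ofReal (φ y) ∂μ :=
          setLIntegral_mono' hQm fun y hy => ENNReal.ofReal_le_ofReal (hcube y hy)
      _ ≤ ∫⁻ y, ENNReal.ofReal (φ y) ∂μ := setLIntegral_le_lintegral Q _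
      _ = ENNReal.ofReal (ρ * ∫ x, φ x) := key
  have hone : ENNReal.ofReal δ⁻¹ * ENNReal.ofReal δ = 1 := by
    rw [← ENNReal.ofReal_mul (by positivity), inv_mul_cancel₀ hδ.ne', ENNReal.ofReal_one]
  have hreal : δ⁻¹ * (ρ * ∫ x, φ x) ≤ (δ⁻¹ * IΦ + 1) * ρ * b ^ (-(d : ℤ)) := by
    have hint : ∫ x, φ x = (b ^ d)⁻¹ * IΦ := phiS_integral hb x₀
    have hzpow : (b : ℝ) ^ (-(d : ℤ)) = (b ^ d)⁻¹ := by
      rw [zpow_neg, zpow_natCast]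
    rw [hint, hzpow]
    have hbd : (0:ℝ) < (b ^ d)⁻¹ := by positivity
    have h1 : δ⁻¹ * IΦ ≤ δ⁻¹ * IΦ + 1 := by linarith
    calc δ⁻¹ * (ρ * ((b ^ d)⁻¹ * IΦ)) = (δ⁻¹ * IΦ) * (ρ * (b ^ d)⁻¹) := by ring
      _ ≤ (δ⁻¹ * IΦ + 1) * (ρ * (b ^ d)⁻¹) := by
          apply mul_le_mul_of_nonneg_right h1 (by positivity)
      _ = (δ⁻¹ * IΦ + 1) * ρ * (b ^ d)⁻¹ := by ring
  calc μ Q = ENNReal.ofReal δ⁻¹ * ENNReal.ofReal δ * μ Q := by rw [hone, one_mul]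
    _ = ENNReal.ofReal δ⁻¹ * (ENNReal.ofReal δ * μ Q) := by rw [mul_assoc]
    _ ≤ ENNReal.ofReal δ⁻¹ * ENNReal.ofReal (ρ * ∫ x, φ x) := by
        exact mul_le_mul_right stepA _
    _ = ENNReal.ofReal (δ⁻¹ * (ρ * ∫ x, φ x)) := (ENNReal.ofReal_mul (by positivity)).symm
    _ ≤ ENNReal.ofReal ((δ⁻¹ * IΦ + 1) * ρ * b ^ (-(d : ℤ))) := ENNReal.ofReal_le_ofReal hreal

end
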